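/- Let D : Fin n → ℝ^d be a design and let O ⊆ ℕ^d be an order ideal identifiable by D. Then no order ideal identifiable by D properly contains O if and only if for every γ in the corner set of O, the evaluation vector X^γ(D) lies in the linear span of {X^α(D) : α ∈ O}. -/

import Mathlib

open Finset

/-- An order ideal (hierarchical model) in ℕ^d: a finite set of exponent vectors
that is downward closed for the componentwise partial order. -/
def IsOrderIdeal {d : ℕ} (O : Finset (Fin d → ℕ)) : Prop :=
  ∀ α ∈ O, ∀ β : Fin d → ℕ, (∀ i, β i ≤ α i) → β ∈ O

/-- γ belongs to the corner set of O: γ is a minimal element of the complement of O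
with respect to the componentwise partial order. -/
def InCorner {d : ℕ} (O : Finset (Fin d → ℕ)) (γ : Fin d → ℕ) : Prop :=
  γ ∉ O ∧ ∀ β : Fin d → ℕ, β ∉ O → (∀ i, β i ≤ γ i) → β = γ

/-- Evaluation (design) vector of the monomial X^α at the design D. -/
def evalVec {n d : ℕ} (D : Fin n → Fin d → ℝ) (α : Fin d → ℕ) : Fin n → ℝ :=
  fun j => ∏ i, (D j i) ^ (α i)

/-- D' is a δ-perturbation of D. -/
def IsPerturbation {n d : ℕ} (δ : Fin d → ℝ) (D D' : Fin n → Fin d → ℝ) : Prop :=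
  ∀ j : Fin n, ∀ i : Fin d, |D' j i - D j i| < δ i

/-- O is numerically stable for the empirical design (D, δ): for every δ-perturbation D'
of D, the family of evaluation vectors (X^α(D'))_{α ∈ O} is linearly independent. -/
def NumStable {n d : ℕ} (D : Fin n → Fin d → ℝ) (δ : Fin d → ℝ)
    (O : Finset (Fin d → ℕ)) : Prop :=
  ∀ D' : Fin n → Fin d → ℝ, IsPerturbation δ D D' →
    LinearIndependent ℝ (fun α : {x // x ∈ O} => evalVec D' α.1)

/-- X^γ(D) numerically depends on O at (D, δ): there is a δ-perturbation D' of D such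
that X^γ(D') lies in the linear span of the evaluation vectors of O at D'. -/
def NumDepends {n d : ℕ} (D : Fin n → Fin d → ℝ) (δ : Fin d → ℝ)
    (O : Finset (Fin d → ℕ)) (γ : Fin d → ℕ) : Prop :=
  ∃ D' : Fin n → Fin d → ℝ, IsPerturbation δ D D' ∧
    evalVec D' γ ∈ Submodule.span ℝ ((fun α => evalVec D' α) '' (O : Set (Fin d → ℕ)))

theorem stmt_15 {n d : ℕ} (D : Fin n → Fin d → ℝ) (O : Finset (Fin d → ℕ))
    (hO : IsOrderIdeal O)
    (hid : LinearIndependent ℝ (fun α : {x // x ∈ O} => evalVec D α.1)) :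
    (¬ ∃ O' : Finset (Fin d → ℕ), IsOrderIdeal O' ∧
        LinearIndependent ℝ (fun α : {x // x ∈ O'} => evalVec D α.1) ∧ O ⊂ O') ↔
    (∀ γ : Fin d → ℕ, InCorner O γ →
      evalVec D γ ∈ Submodule.span ℝ ((fun α => evalVec D α) '' (O : Set (Fin d → ℕ)))) := by

  constructor
  · intro h γ hγ
    by_contra hspan
    apply h
    refine ⟨insert γ O, ?_, ?_, Finset.ssubset_insert hγ.1⟩
    · intro α hα β hβ
      rcases Finset.mem_insert.mp hα with rfl | hαO
      · by_cases hβO : β ∈ O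
        · exact Finset.mem_insert_of_mem hβO
        · exact Finset.mem_insert.mpr (Or.inl (hγ.2 β hβO hβ))
      · exact Finset.mem_insert_of_mem (hO α hαO β hβ)
    · have hnot : γ ∉ (O : Set (Fin d → ℕ)) := by simpa using hγ.1
      have hli : LinearIndependent ℝ
          (fun x : ↥(insert γ (O : Set (Fin d → ℕ))) => evalVec D x.1) :=
        (linearIndepOn_insert (f := evalVec D) hnot).mpr ⟨hid, hspan⟩
      rw [← Finset.coe_insert] at hli
      exact hli
  · rintro h ⟨O', hO', hind', hss⟩
    obtain ⟨a, ha⟩ := Finset.exists_of_ssubset hss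
    have hne : (O' \ O).Nonempty := ⟨a, Finset.mem_sdiff.mpr ⟨ha.1, ha.2⟩⟩
    obtain ⟨γ, hγmem, hγmin⟩ := Finset.exists_min_image (O' \ O) (fun β => ∑ i, β i) hne
    rw [Finset.mem_sdiff] at hγmem
    have hcorner : InCorner O γ := by
      refine ⟨hγmem.2, fun β hβO hle => ?_⟩
      have hβO' : β ∈ O' := hO' γ hγmem.1 β hle
      have hβmem : β ∈ O' \ O := Finset.mem_sdiff.mpr ⟨hβO', hβO⟩
      have hsum := hγmin β hβmem
      funext i
      by_contra hne'
      have hlt : β i < γ i := lt_of_le_of_ne (hle i) hne'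
      have : ∑ j, β j < ∑ j, γ j :=
        Finset.sum_lt_sum (fun j _ => hle j) ⟨i, Finset.mem_univ i, hlt⟩
      omega
    have hspan := h γ hcorner
    have hγO' : γ ∈ O' := hγmem.1
    set s : Set {x // x ∈ O'} := {x | x.1 ∈ O} with hs
    have himg : (fun α : {x // x ∈ O'} => evalVec D α.1) '' s
        = (fun α => evalVec D α) '' (O : Set (Fin d → ℕ)) := by
      ext v
      constructor
      · rintro ⟨⟨α, hα⟩, hαs, rfl⟩
        exact ⟨α, hαs, rfl⟩
      · rintro ⟨α, hα, rfl⟩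
        exact ⟨⟨α, hss.1 hα⟩, hα, rfl⟩
    have := hind'.notMem_span_image (s := s) (x := ⟨γ, hγO'⟩) hγmem.2
    rw [himg] at this
    exact this hspan
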